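/- Let T be a collection of subsets of a finite universe U, let R ⊆ U be nonempty and not a subset of any member of T, and set T' = T ∪ {R}. Let s and s' denote the minimum sizes of DAG compressions of the twinned incidence graphs of T and of T', respectively. If some X₀ ⊆ T satisfies R ⊆ ⋃X₀, and k_⊇ denotes the minimum cardinality of a subset X ⊆ T with R ⊆ ⋃X, then s' ≥ s + k_⊇ + 2. -/

import Mathlib

open Finset

section Defs

variable {α : Type*}

/-- The arc relation induced by a finite set of arcs. -/
def ArcRel (A : Finset (α × α)) (x y : α) : Prop := (x, y) ∈ A

/-- The cluster of a vertex `v`: the set of original vertices (elements of `Vbar`,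
which are exactly the sinks of the cluster DAG) reachable from `v` in `(V, A)`. -/
def Cluster [DecidableEq α] (Vbar : Finset α) (A : Finset (α × α)) (v : α) : Set α :=
  {u | u ∈ Vbar ∧ Relation.ReflTransGen (ArcRel A) v u}

/-- `(V, A, E)` is a DAG compression of the directed graph `(Vbar, Ebar)`. -/
structure IsDagCompression [DecidableEq α] (Vbar : Finset α) (Ebar : Finset (α × α))
    (V : Finset α) (A E : Finset (α × α)) : Prop where
  vbar_subset : Vbar ⊆ V
  arcs_subset : A ⊆ V ×ˢ V
  acyclic : ∀ v : α, ¬ Relation.TransGen (ArcRel A) v v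
  sinks : ∀ v ∈ V, ((∀ u, (v, u) ∉ A) ↔ v ∈ Vbar)
  edges_subset : E ⊆ V ×ˢ V
  represents : (↑Ebar : Set (α × α)) =
    ⋃ e ∈ E, (Cluster Vbar A e.1) ×ˢ (Cluster Vbar A e.2)

/-- An optimal DAG compression: no DAG compression of the same graph has smaller size
`|A| + |E|`. -/
def IsOptimalDagCompression [DecidableEq α] (Vbar : Finset α) (Ebar : Finset (α × α))
    (V : Finset α) (A E : Finset (α × α)) : Prop :=
  IsDagCompression Vbar Ebar V A E ∧
    ∀ (V' : Finset α) (A' E' : Finset (α × α)),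
      IsDagCompression Vbar Ebar V' A' E' → A.card + E.card ≤ A'.card + E'.card

/-- The minimum size `|A| + |E|` of a DAG compression of `(Vbar, Ebar)`. -/
noncomputable def minCompSize [DecidableEq α] (Vbar : Finset α) (Ebar : Finset (α × α)) : ℕ :=
  sInf {n | ∃ (V : Finset α) (A E : Finset (α × α)),
    IsDagCompression Vbar Ebar V A E ∧ A.card + E.card = n}

/-- Two vertices are twins in a directed graph with edge set `F`. -/
def Twins (F : Finset (α × α)) (t₁ t₂ : α) : Prop :=
  (∀ v, (v, t₁) ∈ F ↔ (v, t₂) ∈ F) ∧ (∀ v, (t₁, v) ∈ F ↔ (t₂, v) ∈ F)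

/-- `(V, A)` is a rooted tree: there is a root `r ∈ V` from which every vertex of `V`
is reachable by a unique directed path. -/
def IsTreeOn (V : Finset α) (A : Finset (α × α)) : Prop :=
  ∃ r ∈ V, ∀ v ∈ V, ∃! l : List α,
    l.Chain' (ArcRel A) ∧ l.head? = some r ∧ l.getLast? = some v

end Defs

/-- Vertex set of the `g × g` rook graph: the grid `{1,…,g} × {1,…,g}`. -/
def rookV (g : ℕ) : Finset (ℕ × ℕ) := Finset.Icc 1 g ×ˢ Finset.Icc 1 g

/-- Edge set of the `g × g` rook graph: `(r₁,c₁) → (r₂,c₂)` iff `r₁ = r₂ ∨ c₁ = c₂`. -/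
def rookE (g : ℕ) : Finset ((ℕ × ℕ) × (ℕ × ℕ)) :=
  (rookV g ×ˢ rookV g).filter (fun e => e.1.1 = e.2.1 ∨ e.1.2 = e.2.2)

section Tig

variable {α : Type*} [DecidableEq α]

/-- Vertex type used for twinned incidence graphs: either an element of the universe
(second shore) or one of the fresh vertices `a_S`, `b_S` (first shore). -/
abbrev TigVertex (α : Type*) := α ⊕ (Finset α × Bool)

/-- The fresh vertex `a_S`. -/
def aVert (S : Finset α) : TigVertex α := Sum.inr (S, false)

/-- The fresh vertex `b_S`. -/
def bVert (S : Finset α) : TigVertex α := Sum.inr (S, true)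

/-- Vertex set of the twinned incidence graph of a collection `T` of subsets of `U`. -/
def tigV (U : Finset α) (T : Finset (Finset α)) : Finset (TigVertex α) :=
  U.image Sum.inl ∪ T.image aVert ∪ T.image bVert

/-- Edge set of the twinned incidence graph: edges `(a_S, s)` and `(b_S, s)` for
`S ∈ T` and `s ∈ S`. -/
def tigE (T : Finset (Finset α)) : Finset (TigVertex α × TigVertex α) :=
  T.biUnion fun S =>
    S.image (fun s => (aVert S, Sum.inl s)) ∪ S.image (fun s => (bVert S, Sum.inl s))

end Tig

/-- `{S ∩ {1,…,i} : S ∈ T, 1 ≤ i ≤ m} ∖ {∅}` together with all singletons `{j}`, `j ∈ {1,…,m}`. -/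
def hatCollection (m : ℕ) (T : Finset (Finset ℕ)) : Finset (Finset ℕ) :=
  (Finset.Icc 1 m).image (fun j => ({j} : Finset ℕ)) ∪
    ((T ×ˢ Finset.Icc 1 m).image (fun p => p.1 ∩ Finset.Icc 1 p.2)).erase ∅

namespace TwinnedAux

open Finset Relation

variable {α : Type*} [DecidableEq α]

/-! ### tig structural lemmas -/

lemma aVert_ne_bVert {S S' : Finset α} : aVert S ≠ bVert S' := by
  simp [aVert, bVert]

lemma aVert_inj {S S' : Finset α} (h : aVert S = aVert S') : S = S' := by
  simpa [aVert] using h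

lemma bVert_inj {S S' : Finset α} (h : bVert S = bVert S') : S = S' := by
  simpa [bVert] using h

lemma mem_tigE_iff {T : Finset (Finset α)} {x y : TigVertex α} :
    (x, y) ∈ tigE T ↔ ∃ S ∈ T, (x = aVert S ∨ x = bVert S) ∧ ∃ s ∈ S, y = Sum.inl s := by
  simp only [tigE, Finset.mem_biUnion, Finset.mem_union, Finset.mem_image]
  constructor
  · rintro ⟨S, hS, (⟨s, hs, h⟩ | ⟨s, hs, h⟩)⟩ <;>
      obtain ⟨h1, h2⟩ := Prod.mk.inj h
    · exact ⟨S, hS, Or.inl h1.symm, s, hs, h2.symm⟩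
    · exact ⟨S, hS, Or.inr h1.symm, s, hs, h2.symm⟩
  · rintro ⟨S, hS, (rfl | rfl), s, hs, rfl⟩
    · exact ⟨S, hS, Or.inl ⟨s, hs, rfl⟩⟩
    · exact ⟨S, hS, Or.inr ⟨s, hs, rfl⟩⟩

lemma tigE_row_a {T : Finset (Finset α)} {S : Finset α} {y : TigVertex α}
    (h : (aVert S, y) ∈ tigE T) : ∃ s ∈ S, y = Sum.inl s := by
  rw [mem_tigE_iff] at h
  obtain ⟨S', _, (h1 | h1), s, hs, rfl⟩ := h
  · exact ⟨s, (aVert_inj h1) ▸ hs, rfl⟩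
  · exact absurd h1 aVert_ne_bVert

lemma tigE_row_b {T : Finset (Finset α)} {S : Finset α} {y : TigVertex α}
    (h : (bVert S, y) ∈ tigE T) : ∃ s ∈ S, y = Sum.inl s := by
  rw [mem_tigE_iff] at h
  obtain ⟨S', _, (h1 | h1), s, hs, rfl⟩ := h
  · exact absurd h1.symm aVert_ne_bVert
  · exact ⟨s, (bVert_inj h1) ▸ hs, rfl⟩

lemma aVert_mem_tigV {U : Finset α} {T : Finset (Finset α)} {S : Finset α} (h : S ∈ T) :
    aVert S ∈ tigV U T := by
  simp only [tigV, Finset.mem_union, Finset.mem_image]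
  exact Or.inl (Or.inr ⟨S, h, rfl⟩)

lemma bVert_mem_tigV {U : Finset α} {T : Finset (Finset α)} {S : Finset α} (h : S ∈ T) :
    bVert S ∈ tigV U T := by
  simp only [tigV, Finset.mem_union, Finset.mem_image]
  exact Or.inr ⟨S, h, rfl⟩

lemma aVert_not_mem_tigV {U : Finset α} {T : Finset (Finset α)} {S : Finset α} (h : S ∉ T) :
    aVert S ∉ tigV U T := by
  simp only [tigV, Finset.mem_union, Finset.mem_image, aVert, bVert]
  push_neg
  refine ⟨⟨fun u _ => by simp, fun S' hS' => ?_⟩, fun S' hS' => by simp⟩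
  intro hEq
  obtain ⟨h1, -⟩ := Prod.mk.inj (Sum.inr.inj hEq)
  exact h (h1 ▸ hS')

lemma bVert_not_mem_tigV {U : Finset α} {T : Finset (Finset α)} {S : Finset α} (h : S ∉ T) :
    bVert S ∉ tigV U T := by
  simp only [tigV, Finset.mem_union, Finset.mem_image, aVert, bVert]
  push_neg
  refine ⟨⟨fun u _ => by simp, fun S' hS' => by simp⟩, fun S' hS' => ?_⟩
  intro hEq
  obtain ⟨h1, -⟩ := Prod.mk.inj (Sum.inr.inj hEq)
  exact h (h1 ▸ hS')

lemma tigV_mono {U : Finset α} {T T' : Finset (Finset α)} (h : T ⊆ T') :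
    tigV U T ⊆ tigV U T' := by
  unfold tigV
  exact Finset.union_subset_union
    (Finset.union_subset_union le_rfl (Finset.image_subset_image h))
    (Finset.image_subset_image h)

lemma mem_tigV_insert {U : Finset α} {T : Finset (Finset α)} {R : Finset α} {x : TigVertex α} :
    x ∈ tigV U (insert R T) ↔ x ∈ tigV U T ∨ x = aVert R ∨ x = bVert R := by
  simp only [tigV, Finset.image_insert, Finset.mem_union, Finset.mem_insert,
    Finset.union_insert, Finset.insert_union]
  tauto

lemma tigE_mono {T T' : Finset (Finset α)} (h : T ⊆ T') : tigE T ⊆ tigE T' := by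
  intro e he
  obtain ⟨x, y⟩ := e
  rw [mem_tigE_iff] at he ⊢
  obtain ⟨S, hS, h1, h2⟩ := he
  exact ⟨S, h hS, h1, h2⟩

lemma mem_tigE_of_insert {T : Finset (Finset α)} {R : Finset α} {x y : TigVertex α}
    (h : (x, y) ∈ tigE (insert R T)) (h1 : x ≠ aVert R) (h2 : x ≠ bVert R) :
    (x, y) ∈ tigE T := by
  rw [mem_tigE_iff] at h ⊢
  obtain ⟨S, hS, hx, hy⟩ := h
  rcases Finset.mem_insert.mp hS with rfl | hS'
  · rcases hx with rfl | rfl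
    · exact absurd rfl h1
    · exact absurd rfl h2
  · exact ⟨S, hS', hx, hy⟩

end TwinnedAux
namespace TwinnedAux
set_option linter.unusedSectionVars false

open Finset Relation

variable {β : Type*} [DecidableEq β]
variable {Vb V : Finset β} {Eb A E : Finset (β × β)}

lemma cluster_subset_of_rtg {u v : β} (h : ReflTransGen (ArcRel A) u v) :
    Cluster Vb A v ⊆ Cluster Vb A u :=
  fun _ hy => ⟨hy.1, h.trans hy.2⟩

lemma mem_cluster_self {v : β} (h : v ∈ Vb) : v ∈ Cluster Vb A v := ⟨h, ReflTransGen.refl⟩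

lemma mem_cluster_vb {v y : β} (h : y ∈ Cluster Vb A v) : y ∈ Vb := h.1

lemma cluster_of_sink (hc : IsDagCompression Vb Eb V A E) {v : β}
    (hv : v ∈ V) (hvb : v ∈ Vb) : Cluster Vb A v = {v} := by
  ext y
  constructor
  · rintro ⟨hy, hr⟩
    rcases hr.cases_head with rfl | ⟨c, hc1, -⟩
    · rfl
    · exact absurd hc1 ((hc.sinks v hv).2 hvb c)
  · rintro rfl
    exact mem_cluster_self hvb

lemma mem_V_of_rtg (hc : IsDagCompression Vb Eb V A E) {u v : β}
    (hu : u ∈ V) (h : ReflTransGen (ArcRel A) u v) : v ∈ V := by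
  induction h with
  | refl => exact hu
  | tail _ h2 _ => exact (Finset.mem_product.mp (hc.arcs_subset h2)).2

lemma cluster_nonempty (hc : IsDagCompression Vb Eb V A E) :
    ∀ v ∈ V, (Cluster Vb A v).Nonempty := by
  classical
  have H : ∀ (n : ℕ) (v : β), v ∈ V →
      (V.filter (fun x => ReflTransGen (ArcRel A) v x)).card ≤ n →
      (Cluster Vb A v).Nonempty := by
    intro n
    induction n with
    | zero =>
      intro v hv hcard
      have : v ∈ V.filter (fun x => ReflTransGen (ArcRel A) v x) :=
        Finset.mem_filter.mpr ⟨hv, ReflTransGen.refl⟩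
      have := Finset.card_pos.mpr ⟨v, this⟩
      omega
    | succ n ih =>
      intro v hv hcard
      by_cases hvb : v ∈ Vb
      · exact ⟨v, mem_cluster_self hvb⟩
      · obtain ⟨u, hu⟩ : ∃ u, (v, u) ∈ A := by
          by_contra hcon
          push_neg at hcon
          exact hvb ((hc.sinks v hv).1 hcon)
        have huV : u ∈ V := (Finset.mem_product.mp (hc.arcs_subset hu)).2
        have hvmem : v ∈ V.filter (fun x => ReflTransGen (ArcRel A) v x) :=
          Finset.mem_filter.mpr ⟨hv, ReflTransGen.refl⟩
        have hsub : V.filter (fun x => ReflTransGen (ArcRel A) u x) ⊆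
            (V.filter (fun x => ReflTransGen (ArcRel A) v x)).erase v := by
          intro x hx
          obtain ⟨hxV, hxr⟩ := Finset.mem_filter.mp hx
          refine Finset.mem_erase.mpr ⟨?_, Finset.mem_filter.mpr ⟨hxV, ReflTransGen.head hu hxr⟩⟩
          rintro rfl
          exact hc.acyclic x (Relation.TransGen.head' hu hxr)
        have hcard2 : (V.filter (fun x => ReflTransGen (ArcRel A) u x)).card ≤ n := by
          have h1 := Finset.card_le_card hsub
          rw [Finset.card_erase_of_mem hvmem] at h1
          omega
        obtain ⟨y, hy⟩ := ih u huV hcard2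
        exact ⟨y, hy.1, ReflTransGen.head hu hy.2⟩
  intro v hv
  exact H _ v hv le_rfl

lemma crossing {P : β → Prop} {u w : β} (h : ReflTransGen (ArcRel A) u w)
    (hu : ¬ P u) (hw : P w) :
    ∃ p q, (p, q) ∈ A ∧ ¬ P p ∧ P q ∧ ReflTransGen (ArcRel A) u p ∧
      ReflTransGen (ArcRel A) q w := by
  induction h using ReflTransGen.head_induction_on with
  | refl => exact absurd hw hu
  | head h' hrest ih =>
    rename_i a c
    by_cases hPc : P c
    · exact ⟨a, c, h', hu, hPc, ReflTransGen.refl, hrest⟩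
    · obtain ⟨p, q, h1, h2, h3, h4, h5⟩ := ih hPc
      exact ⟨p, q, h1, h2, h3, ReflTransGen.head h' h4, h5⟩

lemma last_arc {u w : β} (h : ReflTransGen (ArcRel A) u w) (hne : u ≠ w) :
    ∃ x, ReflTransGen (ArcRel A) u x ∧ (x, w) ∈ A := by
  rcases h.cases_tail with rfl | ⟨c, hc1, hc2⟩
  · exact absurd rfl hne
  · exact ⟨c, hc1, hc2⟩

lemma first_arc {u w : β} (h : ReflTransGen (ArcRel A) u w) (hne : u ≠ w) :
    ∃ y, (u, y) ∈ A ∧ ReflTransGen (ArcRel A) y w := by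
  rcases h.cases_head with rfl | ⟨c, hc1, hc2⟩
  · exact absurd rfl hne
  · exact ⟨c, hc1, hc2⟩

lemma not_sink_of_out (hc : IsDagCompression Vb Eb V A E) {v u : β}
    (hv : v ∈ V) (h : (v, u) ∈ A) : v ∉ Vb := by
  intro hvb
  exact (hc.sinks v hv).2 hvb u h

end TwinnedAux
namespace TwinnedAux

open Finset Relation

variable {α : Type*} [DecidableEq α]

/-- Cluster contained in the two fresh twin vertices. -/
def DD (R : Finset α) (Vb : Finset (TigVertex α))
    (A : Finset (TigVertex α × TigVertex α)) (v : TigVertex α) : Prop :=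
  Cluster Vb A v ⊆ {aVert R, bVert R}

/-- Cluster contained (via `Sum.inl`) in a single member of `T`. -/
def Good (T : Finset (Finset α)) (Vb : Finset (TigVertex α))
    (A : Finset (TigVertex α × TigVertex α)) (v : TigVertex α) : Prop :=
  ∃ S ∈ T, ∀ y ∈ Cluster Vb A v, ∃ s ∈ S, y = Sum.inl s

/-- Reachable from an endpoint of a kept compression edge. -/
def Rch (R : Finset α) (Vb : Finset (TigVertex α))
    (A E : Finset (TigVertex α × TigVertex α)) (z : TigVertex α) : Prop :=
  ∃ e ∈ E, ¬ DD R Vb A e.1 ∧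
    (Relation.ReflTransGen (ArcRel A) e.1 z ∨ Relation.ReflTransGen (ArcRel A) e.2 z)

section Main

variable {U : Finset α} {T : Finset (Finset α)} {R : Finset α}
variable {V' : Finset (TigVertex α)} {A' E' : Finset (TigVertex α × TigVertex α)}

lemma D_of_rtg {u v : TigVertex α} (h : Relation.ReflTransGen (ArcRel A') u v)
    (hD : DD R (tigV U (insert R T)) A' u) : DD R (tigV U (insert R T)) A' v :=
  fun y hy => hD (cluster_subset_of_rtg h hy)

lemma edge_pair (hc : IsDagCompression (tigV U (insert R T)) (tigE (insert R T)) V' A' E')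
    {e : TigVertex α × TigVertex α} {x y : TigVertex α} (he : e ∈ E')
    (hx : x ∈ Cluster (tigV U (insert R T)) A' e.1)
    (hy : y ∈ Cluster (tigV U (insert R T)) A' e.2) :
    (x, y) ∈ tigE (insert R T) := by
  have h2 : (x, y) ∈ (↑(tigE (insert R T)) : Set (TigVertex α × TigVertex α)) := by
    rw [hc.represents]
    exact Set.mem_iUnion₂.mpr ⟨e, he, Set.mem_prod.mpr ⟨hx, hy⟩⟩
  exact Finset.mem_coe.mp h2

lemma edge_cover (hc : IsDagCompression (tigV U (insert R T)) (tigE (insert R T)) V' A' E')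
    {x y : TigVertex α} (hxy : (x, y) ∈ tigE (insert R T)) :
    ∃ e ∈ E', x ∈ Cluster (tigV U (insert R T)) A' e.1 ∧
      y ∈ Cluster (tigV U (insert R T)) A' e.2 := by
  have h2 : (x, y) ∈ (↑(tigE (insert R T)) : Set (TigVertex α × TigVertex α)) :=
    Finset.mem_coe.mpr hxy
  rw [hc.represents] at h2
  obtain ⟨e, he, hmem⟩ := Set.mem_iUnion₂.mp h2
  exact ⟨e, he, (Set.mem_prod.mp hmem).1, (Set.mem_prod.mp hmem).2⟩

lemma tail_shape (hc : IsDagCompression (tigV U (insert R T)) (tigE (insert R T)) V' A' E')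
    {e : TigVertex α × TigVertex α} (he : e ∈ E') {x : TigVertex α}
    (hx : x ∈ Cluster (tigV U (insert R T)) A' e.1) :
    ∃ S ∈ insert R T, x = aVert S ∨ x = bVert S := by
  have he2 : e.2 ∈ V' := (Finset.mem_product.mp (hc.edges_subset he)).2
  obtain ⟨y, hy⟩ := cluster_nonempty hc e.2 he2
  have := edge_pair hc he hx hy
  rw [mem_tigE_iff] at this
  obtain ⟨S, hS, hxs, -⟩ := this
  exact ⟨S, hS, hxs⟩

lemma head_shape (hc : IsDagCompression (tigV U (insert R T)) (tigE (insert R T)) V' A' E')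
    {e : TigVertex α × TigVertex α} (he : e ∈ E') {y : TigVertex α}
    (hy : y ∈ Cluster (tigV U (insert R T)) A' e.2) :
    ∃ S ∈ insert R T, ∃ s ∈ S, y = Sum.inl s := by
  have he1 : e.1 ∈ V' := (Finset.mem_product.mp (hc.edges_subset he)).1
  obtain ⟨x, hx⟩ := cluster_nonempty hc e.1 he1
  have := edge_pair hc he hx hy
  rw [mem_tigE_iff] at this
  obtain ⟨S, hS, -, hys⟩ := this
  exact ⟨S, hS, hys⟩

lemma head_inl (hc : IsDagCompression (tigV U (insert R T)) (tigE (insert R T)) V' A' E')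
    {e : TigVertex α × TigVertex α} (he : e ∈ E') {y : TigVertex α}
    (hy : y ∈ Cluster (tigV U (insert R T)) A' e.2) :
    ∃ s : α, y = Sum.inl s := by
  obtain ⟨S, -, s, -, hs⟩ := head_shape hc he hy
  exact ⟨s, hs⟩

lemma shore_of_not_D (hc : IsDagCompression (tigV U (insert R T)) (tigE (insert R T)) V' A' E')
    {e : TigVertex α × TigVertex α} (he : e ∈ E')
    (hnd : ¬ DD R (tigV U (insert R T)) A' e.1) :
    ∃ S ∈ T, aVert S ∈ Cluster (tigV U (insert R T)) A' e.1 ∨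
      bVert S ∈ Cluster (tigV U (insert R T)) A' e.1 := by
  obtain ⟨x, hx, hxn⟩ := Set.not_subset.mp hnd
  obtain ⟨S, hS, hcase⟩ := tail_shape hc he hx
  rcases Finset.mem_insert.mp hS with rfl | hS'
  · exfalso
    apply hxn
    rcases hcase with rfl | rfl
    · exact Set.mem_insert _ _
    · exact Set.mem_insert_of_mem _ rfl
  · rcases hcase with rfl | rfl
    · exact ⟨S, hS', Or.inl hx⟩
    · exact ⟨S, hS', Or.inr hx⟩

lemma row_of_shore (hc : IsDagCompression (tigV U (insert R T)) (tigE (insert R T)) V' A' E')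
    {e : TigVertex α × TigVertex α} (he : e ∈ E') {S : Finset α}
    (hx : aVert S ∈ Cluster (tigV U (insert R T)) A' e.1 ∨
      bVert S ∈ Cluster (tigV U (insert R T)) A' e.1)
    {y : TigVertex α} (hy : y ∈ Cluster (tigV U (insert R T)) A' e.2) :
    ∃ s ∈ S, y = Sum.inl s := by
  rcases hx with hx | hx
  · exact tigE_row_a (edge_pair hc he hx hy)
  · exact tigE_row_b (edge_pair hc he hx hy)

lemma head_not_D (hc : IsDagCompression (tigV U (insert R T)) (tigE (insert R T)) V' A' E')
    {e : TigVertex α × TigVertex α} (he : e ∈ E') :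
    ¬ DD R (tigV U (insert R T)) A' e.2 := by
  intro hD
  have he2 : e.2 ∈ V' := (Finset.mem_product.mp (hc.edges_subset he)).2
  obtain ⟨y, hy⟩ := cluster_nonempty hc e.2 he2
  obtain ⟨s, rfl⟩ := head_inl hc he hy
  rcases hD hy with h | h <;> simp [aVert, bVert] at h

lemma aR_mem_Vb : aVert R ∈ tigV U (insert R T) := aVert_mem_tigV (Finset.mem_insert_self R T)

lemma bR_mem_Vb : bVert R ∈ tigV U (insert R T) := bVert_mem_tigV (Finset.mem_insert_self R T)

lemma cluster_aR (hc : IsDagCompression (tigV U (insert R T)) (tigE (insert R T)) V' A' E') :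
    Cluster (tigV U (insert R T)) A' (aVert R) = {aVert R} :=
  cluster_of_sink hc (hc.vbar_subset aR_mem_Vb) aR_mem_Vb

lemma cluster_bR (hc : IsDagCompression (tigV U (insert R T)) (tigE (insert R T)) V' A' E') :
    Cluster (tigV U (insert R T)) A' (bVert R) = {bVert R} :=
  cluster_of_sink hc (hc.vbar_subset bR_mem_Vb) bR_mem_Vb

lemma D_aR (hc : IsDagCompression (tigV U (insert R T)) (tigE (insert R T)) V' A' E') :
    DD R (tigV U (insert R T)) A' (aVert R) := by
  rw [DD, cluster_aR hc]
  exact Set.singleton_subset_iff.mpr (Set.mem_insert _ _)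

lemma D_bR (hc : IsDagCompression (tigV U (insert R T)) (tigE (insert R T)) V' A' E') :
    DD R (tigV U (insert R T)) A' (bVert R) := by
  rw [DD, cluster_bR hc]
  exact Set.singleton_subset_iff.mpr (Set.mem_insert_of_mem _ rfl)

lemma not_good_of_D (hc : IsDagCompression (tigV U (insert R T)) (tigE (insert R T)) V' A' E')
    {v : TigVertex α} (hv : v ∈ V') (hD : DD R (tigV U (insert R T)) A' v) :
    ¬ Good T (tigV U (insert R T)) A' v := by
  rintro ⟨S, -, hshape⟩
  obtain ⟨y, hy⟩ := cluster_nonempty hc v hv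
  obtain ⟨s, -, rfl⟩ := hshape y hy
  rcases hD hy with h | h <;> simp [aVert, bVert] at h

lemma lemA (hc : IsDagCompression (tigV U (insert R T)) (tigE (insert R T)) V' A' E')
    {z : TigVertex α} (hz : Rch R (tigV U (insert R T)) A' E' z)
    (hshape : ∀ y ∈ Cluster (tigV U (insert R T)) A' z, ∃ s : α, y = Sum.inl s) :
    Good T (tigV U (insert R T)) A' z := by
  obtain ⟨e, he, hnd, hcase⟩ := hz
  rcases hcase with h1 | h2
  · exfalso
    have hzV : z ∈ V' := mem_V_of_rtg hc (Finset.mem_product.mp (hc.edges_subset he)).1 h1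
    obtain ⟨y, hy⟩ := cluster_nonempty hc z hzV
    obtain ⟨s, rfl⟩ := hshape y hy
    obtain ⟨S, -, hys⟩ := tail_shape hc he (cluster_subset_of_rtg h1 hy)
    rcases hys with h | h <;> simp [aVert, bVert] at h
  · obtain ⟨S, hS, hx⟩ := shore_of_not_D hc he hnd
    refine ⟨S, hS, fun y hy => ?_⟩
    exact row_of_shore hc he hx (cluster_subset_of_rtg h2 hy)

end Main

end TwinnedAux
namespace TwinnedAux
set_option linter.unusedSectionVars false

open Finset Relation

variable {α : Type*} [DecidableEq α]

open Classical in
/-- Kept arcs of the restricted compression. -/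
noncomputable def KeepA (U : Finset α) (T : Finset (Finset α)) (R : Finset α)
    (A E : Finset (TigVertex α × TigVertex α)) : Finset (TigVertex α × TigVertex α) :=
  A.filter fun a => Rch R (tigV U (insert R T)) A E a.1 ∧
    ¬ DD R (tigV U (insert R T)) A a.1 ∧ ¬ DD R (tigV U (insert R T)) A a.2

open Classical in
/-- Deleted arcs. -/
noncomputable def DelA (U : Finset α) (T : Finset (Finset α)) (R : Finset α)
    (A E : Finset (TigVertex α × TigVertex α)) : Finset (TigVertex α × TigVertex α) :=
  A.filter fun a => ¬ (Rch R (tigV U (insert R T)) A E a.1 ∧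
    ¬ DD R (tigV U (insert R T)) A a.1 ∧ ¬ DD R (tigV U (insert R T)) A a.2)

open Classical in
/-- Kept compression edges. -/
noncomputable def KeepE (U : Finset α) (T : Finset (Finset α)) (R : Finset α)
    (A E : Finset (TigVertex α × TigVertex α)) : Finset (TigVertex α × TigVertex α) :=
  E.filter fun e => ¬ DD R (tigV U (insert R T)) A e.1

open Classical in
/-- Deleted compression edges. -/
noncomputable def DelE (U : Finset α) (T : Finset (Finset α)) (R : Finset α)
    (A E : Finset (TigVertex α × TigVertex α)) : Finset (TigVertex α × TigVertex α) :=
  E.filter fun e => DD R (tigV U (insert R T)) A e.1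

open Classical in
/-- New vertex set. -/
noncomputable def VNew (U : Finset α) (T : Finset (Finset α)) (R : Finset α)
    (V : Finset (TigVertex α)) (A E : Finset (TigVertex α × TigVertex α)) :
    Finset (TigVertex α) :=
  V.filter fun z => (Rch R (tigV U (insert R T)) A E z ∧ ¬ DD R (tigV U (insert R T)) A z) ∨
    z ∈ tigV U T

lemma mem_KeepA {U : Finset α} {T : Finset (Finset α)} {R : Finset α}
    {A E : Finset (TigVertex α × TigVertex α)} {a : TigVertex α × TigVertex α} :
    a ∈ KeepA U T R A E ↔ a ∈ A ∧ Rch R (tigV U (insert R T)) A E a.1 ∧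
      ¬ DD R (tigV U (insert R T)) A a.1 ∧ ¬ DD R (tigV U (insert R T)) A a.2 := by
  simp [KeepA, Finset.mem_filter]

lemma mem_DelA {U : Finset α} {T : Finset (Finset α)} {R : Finset α}
    {A E : Finset (TigVertex α × TigVertex α)} {a : TigVertex α × TigVertex α} :
    a ∈ DelA U T R A E ↔ a ∈ A ∧ ¬ (Rch R (tigV U (insert R T)) A E a.1 ∧
      ¬ DD R (tigV U (insert R T)) A a.1 ∧ ¬ DD R (tigV U (insert R T)) A a.2) := by
  simp only [DelA, Finset.mem_filter]

lemma mem_KeepE {U : Finset α} {T : Finset (Finset α)} {R : Finset α}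
    {A E : Finset (TigVertex α × TigVertex α)} {e : TigVertex α × TigVertex α} :
    e ∈ KeepE U T R A E ↔ e ∈ E ∧ ¬ DD R (tigV U (insert R T)) A e.1 := by
  simp [KeepE, Finset.mem_filter]

lemma mem_DelE {U : Finset α} {T : Finset (Finset α)} {R : Finset α}
    {A E : Finset (TigVertex α × TigVertex α)} {e : TigVertex α × TigVertex α} :
    e ∈ DelE U T R A E ↔ e ∈ E ∧ DD R (tigV U (insert R T)) A e.1 := by
  simp [DelE, Finset.mem_filter]

lemma card_KeepA_DelA {U : Finset α} {T : Finset (Finset α)} {R : Finset α}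
    {A E : Finset (TigVertex α × TigVertex α)} :
    (KeepA U T R A E).card + (DelA U T R A E).card = A.card := by
  classical
  rw [KeepA, DelA]
  exact Finset.card_filter_add_card_filter_not _

lemma card_KeepE_DelE {U : Finset α} {T : Finset (Finset α)} {R : Finset α}
    {A E : Finset (TigVertex α × TigVertex α)} :
    (KeepE U T R A E).card + (DelE U T R A E).card = E.card := by
  classical
  rw [KeepE, DelE]
  have := Finset.card_filter_add_card_filter_not
    (s := E) (p := fun e => ¬ DD R (tigV U (insert R T)) A e.1)
  simpa using this

section Constr

variable {U : Finset α} {T : Finset (Finset α)} {R : Finset α}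
variable {V' : Finset (TigVertex α)} {A' E' : Finset (TigVertex α × TigVertex α)}

lemma Rch_of_rtg {u v : TigVertex α} (h : Rch R (tigV U (insert R T)) A' E' u)
    (h2 : Relation.ReflTransGen (ArcRel A') u v) : Rch R (tigV U (insert R T)) A' E' v := by
  obtain ⟨e, he, hnd, hor⟩ := h
  exact ⟨e, he, hnd, hor.imp (·.trans h2) (·.trans h2)⟩

lemma rtg_new {z y : TigVertex α}
    (hyb : y ∈ tigV U (insert R T)) (hyn : y ≠ aVert R) (hyn2 : y ≠ bVert R)
    (h : Relation.ReflTransGen (ArcRel A') z y) (hz1 : Rch R (tigV U (insert R T)) A' E' z) :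
    Relation.ReflTransGen (ArcRel (KeepA U T R A' E')) z y := by
  revert hz1
  induction h using Relation.ReflTransGen.head_induction_on with
  | refl => intro _; exact Relation.ReflTransGen.refl
  | head h' hrest ih =>
    rename_i a c
    intro ha
    have hrc : Rch R (tigV U (insert R T)) A' E' c :=
      Rch_of_rtg ha (Relation.ReflTransGen.single h')
    have hya : y ∈ Cluster (tigV U (insert R T)) A' a :=
      ⟨hyb, Relation.ReflTransGen.head h' hrest⟩
    have hyc : y ∈ Cluster (tigV U (insert R T)) A' c := ⟨hyb, hrest⟩
    have hnda : ¬ DD R (tigV U (insert R T)) A' a := by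
      intro hD
      rcases hD hya with h | h
      · exact hyn h
      · exact hyn2 h
    have hndc : ¬ DD R (tigV U (insert R T)) A' c := by
      intro hD
      rcases hD hyc with h | h
      · exact hyn h
      · exact hyn2 h
    have harc : (a, c) ∈ KeepA U T R A' E' := mem_KeepA.mpr ⟨h', ha, hnda, hndc⟩
    exact Relation.ReflTransGen.head harc (ih hrc)

lemma cluster_new (hRT : R ∉ T) {z : TigVertex α}
    (hz1 : Rch R (tigV U (insert R T)) A' E' z) (hz2 : ¬ DD R (tigV U (insert R T)) A' z) :
    Cluster (tigV U T) (KeepA U T R A' E') z =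
      Cluster (tigV U (insert R T)) A' z \ {aVert R, bVert R} := by
  ext y
  constructor
  · rintro ⟨hyb, hr⟩
    have hr' : Relation.ReflTransGen (ArcRel A') z y :=
      Relation.ReflTransGen.mono (r := ArcRel (KeepA U T R A' E')) (p := ArcRel A') (fun x y h => (mem_KeepA.mp h).1) _ _ hr
    refine ⟨⟨tigV_mono (Finset.subset_insert R T) hyb, hr'⟩, ?_⟩
    intro hmem
    rcases hmem with h | h
    · exact aVert_not_mem_tigV hRT (h ▸ hyb)
    · exact bVert_not_mem_tigV hRT (h ▸ hyb)
  · rintro ⟨⟨hyb, hr⟩, hyn⟩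
    have hyn1 : y ≠ aVert R := fun h => hyn (Or.inl h)
    have hyn2 : y ≠ bVert R := fun h => hyn (Or.inr h)
    have hymem : y ∈ tigV U T := by
      rcases mem_tigV_insert.mp hyb with h | h | h
      · exact h
      · exact absurd h hyn1
      · exact absurd h hyn2
    exact ⟨hymem, rtg_new hyb hyn1 hyn2 hr hz1⟩

lemma constr (hc : IsDagCompression (tigV U (insert R T)) (tigE (insert R T)) V' A' E')
    (hRT : R ∉ T) :
    IsDagCompression (tigV U T) (tigE T) (VNew U T R V' A' E') (KeepA U T R A' E')
      (KeepE U T R A' E') := by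
  classical
  have hVbsub : tigV U T ⊆ tigV U (insert R T) := tigV_mono (Finset.subset_insert R T)
  constructor
  -- vbar_subset
  · intro z hz
    exact Finset.mem_filter.mpr ⟨hc.vbar_subset (hVbsub hz), Or.inr hz⟩
  -- arcs_subset
  · intro a ha
    obtain ⟨hA, hRp, hnp, hnq⟩ := mem_KeepA.mp ha
    have hmem := Finset.mem_product.mp (hc.arcs_subset hA)
    refine Finset.mem_product.mpr ⟨Finset.mem_filter.mpr ⟨hmem.1, Or.inl ⟨hRp, hnp⟩⟩,
      Finset.mem_filter.mpr ⟨hmem.2, Or.inl ⟨?_, hnq⟩⟩⟩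
    exact Rch_of_rtg hRp (Relation.ReflTransGen.single hA)
  -- acyclic
  · intro v hv
    exact hc.acyclic v (Relation.TransGen.mono (r := ArcRel (KeepA U T R A' E')) (p := ArcRel A') (fun x y h => (mem_KeepA.mp h).1) _ _ hv)
  -- sinks
  · intro v hv
    obtain ⟨hvV, hvcase⟩ := Finset.mem_filter.mp hv
    constructor
    · intro hnone
      by_contra hvb
      rcases hvcase with ⟨hRv, hnDv⟩ | hvb'
      · have hvb'' : v ∉ tigV U (insert R T) := by
          intro hmem
          rcases mem_tigV_insert.mp hmem with h | h | h
          · exact hvb h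
          · exact hnDv (h ▸ D_aR hc)
          · exact hnDv (h ▸ D_bR hc)
        obtain ⟨u, hu⟩ : ∃ u, (v, u) ∈ A' := by
          by_contra hcon
          push_neg at hcon
          exact hvb'' ((hc.sinks v hvV).1 hcon)
        obtain ⟨w, hw, hwn⟩ := Set.not_subset.mp hnDv
        have hvw : v ≠ w := by
          rintro rfl
          exact hvb'' hw.1
        obtain ⟨y, hy1, hy2⟩ := first_arc hw.2 hvw
        have hndy : ¬ DD R (tigV U (insert R T)) A' y := by
          intro hD
          exact hwn (hD ⟨hw.1, hy2⟩)
        exact hnone y (mem_KeepA.mpr ⟨hy1, hRv, hnDv, hndy⟩)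
      · exact hvb hvb'
    · intro hvb u hu
      exact (hc.sinks v hvV).2 (hVbsub hvb) u (mem_KeepA.mp hu).1
  -- edges_subset
  · intro e he
    obtain ⟨heE, hnd⟩ := mem_KeepE.mp he
    have hmem := Finset.mem_product.mp (hc.edges_subset heE)
    refine Finset.mem_product.mpr ⟨Finset.mem_filter.mpr ⟨hmem.1, Or.inl
      ⟨⟨e, heE, hnd, Or.inl Relation.ReflTransGen.refl⟩, hnd⟩⟩,
      Finset.mem_filter.mpr ⟨hmem.2, Or.inl
      ⟨⟨e, heE, hnd, Or.inr Relation.ReflTransGen.refl⟩, head_not_D hc heE⟩⟩⟩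
  -- represents
  · ext p
    obtain ⟨x, y⟩ := p
    simp only [Finset.mem_coe, Set.mem_iUnion, Set.mem_prod]
    constructor
    · intro hxy
      have hxy' : (x, y) ∈ tigE (insert R T) := tigE_mono (Finset.subset_insert R T) hxy
      obtain ⟨e, he, hx, hy⟩ := edge_cover hc hxy'
      obtain ⟨S, hS, hxs, s, hs, rfl⟩ := mem_tigE_iff.mp hxy
      have hxnab : x ∉ ({aVert R, bVert R} : Set (TigVertex α)) := by
        intro hmem
        rcases hmem with h | h
        · rcases hxs with rfl | rfl
          · exact hRT ((aVert_inj h) ▸ hS)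
          · exact aVert_ne_bVert h.symm
        · rcases hxs with rfl | rfl
          · exact aVert_ne_bVert h
          · exact hRT ((bVert_inj h) ▸ hS)
      have hnd : ¬ DD R (tigV U (insert R T)) A' e.1 := fun hD => hxnab (hD hx)
      have hRe1 : Rch R (tigV U (insert R T)) A' E' e.1 :=
        ⟨e, he, hnd, Or.inl Relation.ReflTransGen.refl⟩
      have hRe2 : Rch R (tigV U (insert R T)) A' E' e.2 :=
        ⟨e, he, hnd, Or.inr Relation.ReflTransGen.refl⟩
      refine ⟨e, ⟨mem_KeepE.mpr ⟨he, hnd⟩, ?_, ?_⟩⟩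
      · rw [cluster_new hRT hRe1 hnd]
        exact ⟨hx, hxnab⟩
      · rw [cluster_new hRT hRe2 (head_not_D hc he)]
        refine ⟨hy, ?_⟩
        intro hmem
        rcases hmem with h | h <;> simp [aVert, bVert] at h
    · rintro ⟨e, ⟨heK, hx, hy⟩⟩
      obtain ⟨heE, hnd⟩ := mem_KeepE.mp heK
      have hRe1 : Rch R (tigV U (insert R T)) A' E' e.1 :=
        ⟨e, heE, hnd, Or.inl Relation.ReflTransGen.refl⟩
      have hRe2 : Rch R (tigV U (insert R T)) A' E' e.2 :=
        ⟨e, heE, hnd, Or.inr Relation.ReflTransGen.refl⟩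
      rw [cluster_new hRT hRe1 hnd] at hx
      rw [cluster_new hRT hRe2 (head_not_D hc heE)] at hy
      have hmem := edge_pair hc heE hx.1 hy.1
      exact mem_tigE_of_insert hmem (fun h => hx.2 (Or.inl h)) (fun h => hx.2 (Or.inr h))

end Constr

end TwinnedAux
namespace TwinnedAux
set_option linter.unusedSectionVars false

open Finset Relation

variable {α : Type*} [DecidableEq α]

open Classical in
/-- Choice of a covering set of `T` associated with a deleted token. -/
noncomputable def fTok (T : Finset (Finset α)) (Vb : Finset (TigVertex α))
    (A : Finset (TigVertex α × TigVertex α)) :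
    (TigVertex α × TigVertex α) ⊕ (TigVertex α × TigVertex α) → Finset α
  | Sum.inl a =>
      if h : Good T Vb A a.2 then h.choose
      else if h2 : ∃ S ∈ T, aVert S ∈ Cluster Vb A a.1 ∨ bVert S ∈ Cluster Vb A a.1
        then h2.choose else ∅
  | Sum.inr e => if h : Good T Vb A e.2 then h.choose else ∅

/-- Tokens possibly used by the main cover. -/
def TokProp (U : Finset α) (T : Finset (Finset α)) (R : Finset α)
    (A : Finset (TigVertex α × TigVertex α)) :
    (TigVertex α × TigVertex α) ⊕ (TigVertex α × TigVertex α) → Prop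
  | Sum.inl a => (¬ DD R (tigV U (insert R T)) A a.1 ∧ DD R (tigV U (insert R T)) A a.2 ∧
      aVert R ∈ Cluster (tigV U (insert R T)) A a.2) ∨
      (¬ Good T (tigV U (insert R T)) A a.1 ∧ Good T (tigV U (insert R T)) A a.2)
  | Sum.inr e => aVert R ∈ Cluster (tigV U (insert R T)) A e.1

section FT
variable {T : Finset (Finset α)} {Vb : Finset (TigVertex α)}
  {A : Finset (TigVertex α × TigVertex α)}

lemma fTok_good_head {a : TigVertex α × TigVertex α} (h : Good T Vb A a.2) :
    fTok T Vb A (Sum.inl a) ∈ T ∧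
      ∀ y ∈ Cluster Vb A a.2, ∃ s ∈ fTok T Vb A (Sum.inl a), y = Sum.inl s := by
  simp only [fTok, dif_pos h]
  exact h.choose_spec

lemma fTok_shore {a : TigVertex α × TigVertex α} (h : ¬ Good T Vb A a.2)
    (h2 : ∃ S ∈ T, aVert S ∈ Cluster Vb A a.1 ∨ bVert S ∈ Cluster Vb A a.1) :
    fTok T Vb A (Sum.inl a) ∈ T ∧
      (aVert (fTok T Vb A (Sum.inl a)) ∈ Cluster Vb A a.1 ∨
        bVert (fTok T Vb A (Sum.inl a)) ∈ Cluster Vb A a.1) := by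
  simp only [fTok, dif_neg h, dif_pos h2]
  exact h2.choose_spec

lemma fTok_inr {e : TigVertex α × TigVertex α} (h : Good T Vb A e.2) :
    fTok T Vb A (Sum.inr e) ∈ T ∧
      ∀ y ∈ Cluster Vb A e.2, ∃ s ∈ fTok T Vb A (Sum.inr e), y = Sum.inl s := by
  simp only [fTok, dif_pos h]
  exact h.choose_spec

end FT

section Count

variable {U : Finset α} {T : Finset (Finset α)} {R : Finset α}
variable {V' : Finset (TigVertex α)} {A' E' : Finset (TigVertex α × TigVertex α)}

/-- Assemble a cover from tokens plus two spare deleted items. -/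
lemma assemble {W D : Finset ((TigVertex α × TigVertex α) ⊕ (TigVertex α × TigVertex α))}
    {f : (TigVertex α × TigVertex α) ⊕ (TigVertex α × TigVertex α) → Finset α}
    {σ₁ σ₂ : (TigVertex α × TigVertex α) ⊕ (TigVertex α × TigVertex α)}
    (hW : W ⊆ D) (h1 : σ₁ ∈ D) (h2 : σ₂ ∈ D) (h1n : σ₁ ∉ W) (h2n : σ₂ ∉ W) (hne : σ₁ ≠ σ₂)
    (hcov : ∀ r ∈ R, ∃ t ∈ W, f t ∈ T ∧ r ∈ f t) :
    ∃ X ⊆ T, R ⊆ X.sup id ∧ X.card + 2 ≤ D.card := by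
  classical
  refine ⟨(W.image f) ∩ T, Finset.inter_subset_right, ?_, ?_⟩
  · intro r hr
    obtain ⟨t, ht, hfT, hrf⟩ := hcov r hr
    have hmem : f t ∈ (W.image f) ∩ T :=
      Finset.mem_inter.mpr ⟨Finset.mem_image_of_mem f ht, hfT⟩
    exact (Finset.le_sup (f := id) hmem : f t ⊆ _) hrf
  · have hX : ((W.image f) ∩ T).card ≤ W.card :=
      le_trans (Finset.card_le_card Finset.inter_subset_left) (Finset.card_image_le)
    have hins : insert σ₁ (insert σ₂ W) ⊆ D := by
      intro t ht
      rcases Finset.mem_insert.mp ht with rfl | ht'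
      · exact h1
      rcases Finset.mem_insert.mp ht' with rfl | ht''
      · exact h2
      · exact hW ht''
    have hc1 : σ₁ ∉ insert σ₂ W := by
      intro hmem
      rcases Finset.mem_insert.mp hmem with h | h
      · exact hne h
      · exact h1n h
    have hcard : (insert σ₁ (insert σ₂ W)).card = W.card + 2 := by
      rw [Finset.card_insert_of_notMem hc1, Finset.card_insert_of_notMem h2n]
    have := Finset.card_le_card hins
    omega

open Classical in
/-- The main cover: every element of `R` is covered by a token of the main token set. -/
lemma master_cov {X₀ : Finset (Finset α)}
    (hc : IsDagCompression (tigV U (insert R T)) (tigE (insert R T)) V' A' E')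
    (hX₀T : X₀ ⊆ T) (hX₀cov : R ⊆ X₀.sup id) :
    ∀ r ∈ R, ∃ t ∈ ((DelA U T R A' E').disjSum (DelE U T R A' E')).filter
        (TokProp U T R A'),
      fTok T (tigV U (insert R T)) A' t ∈ T ∧ r ∈ fTok T (tigV U (insert R T)) A' t := by
  classical
  intro r hr
  have hrow : (aVert R, Sum.inl r) ∈ tigE (insert R T) :=
    mem_tigE_iff.mpr ⟨R, Finset.mem_insert_self R T, Or.inl rfl, r, hr, rfl⟩
  obtain ⟨e, he, hx, hy⟩ := edge_cover hc hrow
  have hRshape : ∀ y ∈ Cluster (tigV U (insert R T)) A' e.2, ∃ s ∈ R, y = Sum.inl s :=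
    fun y hy' => tigE_row_a (edge_pair hc he hx hy')
  by_cases hD : DD R (tigV U (insert R T)) A' e.1
  · -- the covering edge is deleted
    by_cases hg : Good T (tigV U (insert R T)) A' e.2
    · -- good head: use the edge itself as token
      refine ⟨Sum.inr e, ?_, ?_, ?_⟩
      · exact Finset.mem_filter.mpr ⟨Finset.inr_mem_disjSum.mpr (mem_DelE.mpr ⟨he, hD⟩), hx⟩
      · exact (fTok_inr hg).1
      · obtain ⟨s, hs, heq⟩ := (fTok_inr hg).2 _ hy
        exact (Sum.inl.inj heq) ▸ hs
    · -- bad head: walk down to a good vertex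
      have hgoodr : Good T (tigV U (insert R T)) A' (Sum.inl r) := by
        obtain ⟨S₀, hS₀, hrS₀⟩ := Finset.mem_sup.mp (hX₀cov hr)
        have hrV : Sum.inl r ∈ V' := hc.vbar_subset (mem_cluster_vb hy)
        refine ⟨S₀, hX₀T hS₀, ?_⟩
        rw [cluster_of_sink hc hrV (mem_cluster_vb hy)]
        rintro y rfl
        exact ⟨r, hrS₀, rfl⟩
      obtain ⟨w, g, harc, hgw, hgg, hrtg1, hrtg2⟩ := crossing hy.2 hg hgoodr
      have hnotR : ¬ Rch R (tigV U (insert R T)) A' E' w := by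
        intro hRch
        refine hgw (lemA hc hRch ?_)
        intro y hyw
        obtain ⟨s, -, hs⟩ := hRshape y (cluster_subset_of_rtg hrtg1 hyw)
        exact ⟨s, hs⟩
      refine ⟨Sum.inl (w, g), ?_, ?_, ?_⟩
      · refine Finset.mem_filter.mpr ⟨Finset.inl_mem_disjSum.mpr
          (mem_DelA.mpr ⟨harc, fun hcon => hnotR hcon.1⟩), Or.inr ⟨hgw, hgg⟩⟩
      · exact (fTok_good_head (a := (w, g)) hgg).1
      · obtain ⟨s, hs, heq⟩ := (fTok_good_head (a := (w, g)) hgg).2 (Sum.inl r)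
          ⟨mem_cluster_vb hy, hrtg2⟩
        exact (Sum.inl.inj heq) ▸ hs
  · -- the covering edge is kept: use a crossing arc into the `D`-region
    obtain ⟨p, q, harc, hnp, hq, hrtg1, hrtg2⟩ := crossing hx.2 hD (D_aR hc)
    have hqV : q ∈ V' := (Finset.mem_product.mp (hc.arcs_subset harc)).2
    have hng : ¬ Good T (tigV U (insert R T)) A' q := not_good_of_D hc hqV hq
    have h2 : ∃ S ∈ T, aVert S ∈ Cluster (tigV U (insert R T)) A' p ∨
        bVert S ∈ Cluster (tigV U (insert R T)) A' p := by
      obtain ⟨x', hx', hxn⟩ := Set.not_subset.mp hnp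
      have hx'e : x' ∈ Cluster (tigV U (insert R T)) A' e.1 := cluster_subset_of_rtg hrtg1 hx'
      obtain ⟨S, hS, hcase⟩ := tail_shape hc he hx'e
      rcases Finset.mem_insert.mp hS with rfl | hS'
      · exfalso
        apply hxn
        rcases hcase with rfl | rfl
        · exact Or.inl rfl
        · exact Or.inr rfl
      · rcases hcase with rfl | rfl
        · exact ⟨S, hS', Or.inl hx'⟩
        · exact ⟨S, hS', Or.inr hx'⟩
    obtain ⟨hfT, hfshore⟩ := fTok_shore (a := (p, q)) hng h2
    refine ⟨Sum.inl (p, q), ?_, hfT, ?_⟩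
    · refine Finset.mem_filter.mpr ⟨Finset.inl_mem_disjSum.mpr
        (mem_DelA.mpr ⟨harc, fun hcon => hcon.2.2 hq⟩),
        Or.inl ⟨hnp, hq, ⟨aR_mem_Vb, hrtg2⟩⟩⟩
    · have hshore' : aVert (fTok T (tigV U (insert R T)) A' (Sum.inl (p, q))) ∈
          Cluster (tigV U (insert R T)) A' e.1 ∨
          bVert (fTok T (tigV U (insert R T)) A' (Sum.inl (p, q))) ∈
          Cluster (tigV U (insert R T)) A' e.1 :=
        hfshore.imp (fun h => cluster_subset_of_rtg hrtg1 h)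
          (fun h => cluster_subset_of_rtg hrtg1 h)
      obtain ⟨s, hs, heq⟩ := row_of_shore hc he hshore' hy
      exact (Sum.inl.inj heq) ▸ hs

end Count

end TwinnedAux
namespace TwinnedAux
set_option linter.unusedSectionVars false
set_option maxHeartbeats 1000000

open Finset Relation

variable {α : Type*} [DecidableEq α]
variable {U : Finset α} {T : Finset (Finset α)} {R : Finset α}
variable {V' : Finset (TigVertex α)} {A' E' : Finset (TigVertex α × TigVertex α)}

open Classical in
lemma count (hc : IsDagCompression (tigV U (insert R T)) (tigE (insert R T)) V' A' E')
    (hRT : R ∉ T) (hRne : R.Nonempty) (hRns : ∀ S ∈ T, ¬ R ⊆ S)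
    {X₀ : Finset (Finset α)} (hX₀T : X₀ ⊆ T) (hX₀cov : R ⊆ X₀.sup id) :
    ∃ X ⊆ T, R ⊆ X.sup id ∧
      X.card + 2 ≤ (DelA U T R A' E').card + (DelE U T R A' E').card := by
  classical
  obtain ⟨r₀, hr₀⟩ := hRne
  set Del := (DelA U T R A' E').disjSum (DelE U T R A' E') with hDelDef
  have hDelcard : Del.card = (DelA U T R A' E').card + (DelE U T R A' E').card :=
    Finset.card_disjSum _ _
  have hcov := master_cov hc hX₀T hX₀cov
  have hfin : ∀ σ₁ σ₂ : (TigVertex α × TigVertex α) ⊕ (TigVertex α × TigVertex α),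
      σ₁ ∈ Del → σ₂ ∈ Del → ¬ TokProp U T R A' σ₁ → ¬ TokProp U T R A' σ₂ → σ₁ ≠ σ₂ →
      ∃ X ⊆ T, R ⊆ X.sup id ∧
        X.card + 2 ≤ (DelA U T R A' E').card + (DelE U T R A' E').card := by
    intro σ₁ σ₂ h1 h2 hn1 hn2 hne
    obtain ⟨X, hX1, hX2, hX3⟩ := assemble (Finset.filter_subset _ _) h1 h2
      (fun hm => hn1 (Finset.mem_filter.mp hm).2) (fun hm => hn2 (Finset.mem_filter.mp hm).2)
      hne hcov
    exact ⟨X, hX1, hX2, by rw [hDelcard] at hX3; exact hX3⟩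
  -- spare token constructors
  have spareArcBR : ∀ x : TigVertex α, (x, bVert R) ∈ A' →
      Sum.inl (x, bVert R) ∈ Del ∧ ¬ TokProp U T R A' (Sum.inl (x, bVert R)) := by
    intro x hx
    refine ⟨Finset.inl_mem_disjSum.mpr (mem_DelA.mpr ⟨hx, fun hcon => hcon.2.2 (D_bR hc)⟩), ?_⟩
    simp only [TokProp]
    rintro (⟨-, -, haR⟩ | ⟨-, hgood⟩)
    · rw [cluster_bR hc] at haR
      exact aVert_ne_bVert (Set.mem_singleton_iff.mp haR)
    · exact not_good_of_D hc (hc.vbar_subset bR_mem_Vb) (D_bR hc) hgood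
  have spareInnerAR : ∀ z : TigVertex α, (z, aVert R) ∈ A' →
      DD R (tigV U (insert R T)) A' z →
      Sum.inl (z, aVert R) ∈ Del ∧ ¬ TokProp U T R A' (Sum.inl (z, aVert R)) := by
    intro z hz hDz
    refine ⟨Finset.inl_mem_disjSum.mpr (mem_DelA.mpr ⟨hz, fun hcon => hcon.2.2 (D_aR hc)⟩), ?_⟩
    simp only [TokProp]
    rintro (⟨hn, -, -⟩ | ⟨-, hgood⟩)
    · exact hn hDz
    · exact not_good_of_D hc (hc.vbar_subset aR_mem_Vb) (D_aR hc) hgood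
  have spareEntry : ∀ p q : TigVertex α, (p, q) ∈ A' → DD R (tigV U (insert R T)) A' q →
      aVert R ∉ Cluster (tigV U (insert R T)) A' q →
      Sum.inl (p, q) ∈ Del ∧ ¬ TokProp U T R A' (Sum.inl (p, q)) := by
    intro p q hA hq hnaRq
    refine ⟨Finset.inl_mem_disjSum.mpr (mem_DelA.mpr ⟨hA, fun hcon => hcon.2.2 hq⟩), ?_⟩
    simp only [TokProp]
    rintro (⟨-, -, haR⟩ | ⟨-, hgood⟩)
    · exact hnaRq haR
    · exact not_good_of_D hc ((Finset.mem_product.mp (hc.arcs_subset hA)).2) hq hgood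
  have spareEdge : ∀ e : TigVertex α × TigVertex α, e ∈ E' →
      DD R (tigV U (insert R T)) A' e.1 →
      aVert R ∉ Cluster (tigV U (insert R T)) A' e.1 →
      Sum.inr e ∈ Del ∧ ¬ TokProp U T R A' (Sum.inr e) := by
    intro e he hD hnaR
    refine ⟨Finset.inr_mem_disjSum.mpr (mem_DelE.mpr ⟨he, hD⟩), ?_⟩
    simp only [TokProp]
    exact hnaR
  have bRrow : ∀ r ∈ R, ∃ e ∈ E', bVert R ∈ Cluster (tigV U (insert R T)) A' e.1 ∧
      Sum.inl r ∈ Cluster (tigV U (insert R T)) A' e.2 := fun r hr =>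
    edge_cover hc (mem_tigE_iff.mpr ⟨R, Finset.mem_insert_self R T, Or.inr rfl, r, hr, rfl⟩)
  -- main case distinction
  by_cases hPab : ∃ e ∈ E', DD R (tigV U (insert R T)) A' e.1 ∧
      aVert R ∈ Cluster (tigV U (insert R T)) A' e.1 ∧
      bVert R ∈ Cluster (tigV U (insert R T)) A' e.1
  · obtain ⟨e, he, hD, haR, hbR⟩ := hPab
    have hne_a : e.1 ≠ aVert R := by
      intro h
      rw [h, cluster_aR hc] at hbR
      exact aVert_ne_bVert (Set.mem_singleton_iff.mp hbR).symm
    have hne_b : e.1 ≠ bVert R := by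
      intro h
      rw [h, cluster_bR hc] at haR
      exact aVert_ne_bVert (Set.mem_singleton_iff.mp haR)
    obtain ⟨z, hz1, hz2⟩ := last_arc haR.2 hne_a
    obtain ⟨z', hz1', hz2'⟩ := last_arc hbR.2 hne_b
    obtain ⟨hm1, hn1⟩ := spareInnerAR z hz2 (D_of_rtg hz1 hD)
    obtain ⟨hm2, hn2⟩ := spareArcBR z' hz2'
    refine hfin _ _ hm1 hm2 hn1 hn2 ?_
    intro h
    exact aVert_ne_bVert (congrArg Prod.snd (Sum.inl.inj h))
  · set SpA := A'.filter (fun a => a.2 = bVert R) with hSpADef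
    set SpE := E'.filter (fun e => DD R (tigV U (insert R T)) A' e.1 ∧
      aVert R ∉ Cluster (tigV U (insert R T)) A' e.1) with hSpEDef
    have spareSpA : ∀ a ∈ SpA, Sum.inl a ∈ Del ∧ ¬ TokProp U T R A' (Sum.inl a) := by
      rintro ⟨x, y⟩ ha
      obtain ⟨haA, hy⟩ := Finset.mem_filter.mp ha
      simp only at hy
      subst hy
      exact spareArcBR x haA
    have spareSpE : ∀ e ∈ SpE, Sum.inr e ∈ Del ∧ ¬ TokProp U T R A' (Sum.inr e) := by
      intro e he
      obtain ⟨h1, h2, h3⟩ := Finset.mem_filter.mp he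
      exact spareEdge e h1 h2 h3
    by_cases hsp : 2 ≤ SpA.card + SpE.card
    · by_cases h2a : 2 ≤ SpA.card
      · obtain ⟨a, ha, b, hb, hab⟩ := Finset.one_lt_card.mp h2a
        obtain ⟨hm1, hn1⟩ := spareSpA a ha
        obtain ⟨hm2, hn2⟩ := spareSpA b hb
        exact hfin _ _ hm1 hm2 hn1 hn2 (fun h => hab (Sum.inl.inj h))
      · by_cases h1a : 1 ≤ SpA.card
        · have h1e : 1 ≤ SpE.card := by omega
          obtain ⟨a, ha⟩ := Finset.card_pos.mp h1a
          obtain ⟨e, heS⟩ := Finset.card_pos.mp h1e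
          obtain ⟨hm1, hn1⟩ := spareSpA a ha
          obtain ⟨hm2, hn2⟩ := spareSpE e heS
          exact hfin _ _ hm1 hm2 hn1 hn2 (by simp)
        · have h2e : 2 ≤ SpE.card := by omega
          obtain ⟨a, ha, b, hb, hab⟩ := Finset.one_lt_card.mp h2e
          obtain ⟨hm1, hn1⟩ := spareSpE a ha
          obtain ⟨hm2, hn2⟩ := spareSpE b hb
          exact hfin _ _ hm1 hm2 hn1 hn2 (fun h => hab (Sum.inr.inj h))
    · -- at most one spare of the basic kinds
      have hE1 : SpA.Nonempty ∨ SpE.Nonempty := by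
        obtain ⟨e, he, hx, hy⟩ := bRrow r₀ hr₀
        by_cases hD : DD R (tigV U (insert R T)) A' e.1
        · by_cases haRe : aVert R ∈ Cluster (tigV U (insert R T)) A' e.1
          · exact absurd ⟨e, he, hD, haRe, hx⟩ hPab
          · exact Or.inr ⟨e, Finset.mem_filter.mpr ⟨he, hD, haRe⟩⟩
        · have hne : e.1 ≠ bVert R := fun h => hD (h ▸ D_bR hc)
          obtain ⟨z, hz1, hz2⟩ := last_arc hx.2 hne
          exact Or.inl ⟨(z, bVert R), Finset.mem_filter.mpr ⟨hz2, rfl⟩⟩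
      rcases hE1 with ⟨β, hβ⟩ | ⟨ε, hε⟩
      · -- single spare is an arc into bVert R
        have hSpE0 : ∀ e, e ∉ SpE := by
          intro e heS
          have h1 := Finset.card_pos.mpr ⟨β, hβ⟩
          have h2 := Finset.card_pos.mpr ⟨e, heS⟩
          omega
        have hSpAuniq : ∀ a ∈ SpA, a = β := by
          intro a ha
          by_contra hne
          have := Finset.one_lt_card.mpr ⟨a, ha, β, hβ, hne⟩
          omega
        have hPedge : ∀ e ∈ E', DD R (tigV U (insert R T)) A' e.1 →
            aVert R ∈ Cluster (tigV U (insert R T)) A' e.1 := by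
          intro e he hD
          by_contra hn
          exact hSpE0 e (Finset.mem_filter.mpr ⟨he, hD, hn⟩)
        have hbtail : ∀ e ∈ E', bVert R ∈ Cluster (tigV U (insert R T)) A' e.1 →
            ¬ DD R (tigV U (insert R T)) A' e.1 := by
          intro e he hbRe hD
          exact hPab ⟨e, he, hD, hPedge e he hD, hbRe⟩
        obtain ⟨x, y⟩ := β
        have hβA : (x, y) ∈ A' := (Finset.mem_filter.mp hβ).1
        have hβ2 : y = bVert R := by
          have := (Finset.mem_filter.mp hβ).2
          simpa using this
        subst hβ2
        have hreach_x : ∀ e ∈ E', bVert R ∈ Cluster (tigV U (insert R T)) A' e.1 →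
            Relation.ReflTransGen (ArcRel A') e.1 x := by
          intro e he hbRe
          have hnd : ¬ DD R (tigV U (insert R T)) A' e.1 := hbtail e he hbRe
          have hne : e.1 ≠ bVert R := fun h => hnd (h ▸ D_bR hc)
          obtain ⟨z, hz1, hz2⟩ := last_arc hbRe.2 hne
          have hmem : (z, bVert R) ∈ SpA := Finset.mem_filter.mpr ⟨hz2, rfl⟩
          have heq := hSpAuniq _ hmem
          have hzx : z = x := congrArg Prod.fst heq
          exact hzx ▸ hz1
        obtain ⟨e₀, he₀, hx₀, hy₀⟩ := bRrow r₀ hr₀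
        have hnd₀ : ¬ DD R (tigV U (insert R T)) A' e₀.1 := hbtail e₀ he₀ hx₀
        by_cases hDx : DD R (tigV U (insert R T)) A' x
        · by_cases haRx : aVert R ∈ Cluster (tigV U (insert R T)) A' x
          · have hxV : x ∈ V' := (Finset.mem_product.mp (hc.arcs_subset hβA)).1
            have hxnVb : x ∉ tigV U (insert R T) := not_sink_of_out hc hxV hβA
            have hne : x ≠ aVert R := fun h => hxnVb (h ▸ aR_mem_Vb)
            obtain ⟨z, hz1, hz2⟩ := last_arc haRx.2 hne
            obtain ⟨hm1, hn1⟩ := spareArcBR x hβA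
            obtain ⟨hm2, hn2⟩ := spareInnerAR z hz2 (D_of_rtg hz1 hDx)
            refine hfin _ _ hm1 hm2 hn1 hn2 ?_
            intro h
            exact aVert_ne_bVert (congrArg Prod.snd (Sum.inl.inj h)).symm
          · obtain ⟨p, q, harcpq, hnp, hq, hrtg1, hrtg2⟩ := crossing hx₀.2 hnd₀ (D_bR hc)
            by_cases haRq : aVert R ∈ Cluster (tigV U (insert R T)) A' q
            · have hneq : q ≠ aVert R := by
                rintro rfl
                have hmem : bVert R ∈ Cluster (tigV U (insert R T)) A' (aVert R) :=
                  ⟨bR_mem_Vb, hrtg2⟩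
                rw [cluster_aR hc] at hmem
                exact aVert_ne_bVert (Set.mem_singleton_iff.mp hmem).symm
              obtain ⟨z, hz1, hz2⟩ := last_arc haRq.2 hneq
              obtain ⟨hm1, hn1⟩ := spareArcBR x hβA
              obtain ⟨hm2, hn2⟩ := spareInnerAR z hz2 (D_of_rtg hz1 hq)
              refine hfin _ _ hm1 hm2 hn1 hn2 ?_
              intro h
              exact aVert_ne_bVert (congrArg Prod.snd (Sum.inl.inj h)).symm
            · have hneqbR : q ≠ bVert R := by
                rintro rfl
                have hmem : (p, bVert R) ∈ SpA := Finset.mem_filter.mpr ⟨harcpq, rfl⟩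
                have heq := hSpAuniq _ hmem
                have hpx : p = x := congrArg Prod.fst heq
                exact hnp (hpx ▸ hDx)
              obtain ⟨hm1, hn1⟩ := spareArcBR x hβA
              obtain ⟨hm2, hn2⟩ := spareEntry p q harcpq hq haRq
              refine hfin _ _ hm1 hm2 hn1 hn2 ?_
              intro h
              exact hneqbR (congrArg Prod.snd (Sum.inl.inj h)).symm
        · -- funnel contradiction
          exfalso
          obtain ⟨w, hw, hwn⟩ := Set.not_subset.mp hDx
          have hwu₀ : w ∈ Cluster (tigV U (insert R T)) A' e₀.1 :=
            cluster_subset_of_rtg (hreach_x e₀ he₀ hx₀) hw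
          obtain ⟨S, hS, hcase⟩ := tail_shape hc he₀ hwu₀
          have hST : S ∈ T := by
            rcases Finset.mem_insert.mp hS with rfl | h
            · exfalso
              apply hwn
              rcases hcase with rfl | rfl
              · exact Set.mem_insert _ _
              · exact Set.mem_insert_of_mem _ rfl
            · exact h
          have hRS : R ⊆ S := by
            intro r hr
            obtain ⟨e, he, hx1, hy1⟩ := bRrow r hr
            have hrx := hreach_x e he hx1
            have hshore : aVert S ∈ Cluster (tigV U (insert R T)) A' e.1 ∨
                bVert S ∈ Cluster (tigV U (insert R T)) A' e.1 := by
              rcases hcase with rfl | rfl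
              · exact Or.inl (cluster_subset_of_rtg hrx hw)
              · exact Or.inr (cluster_subset_of_rtg hrx hw)
            obtain ⟨s, hs, heq⟩ := row_of_shore hc he hshore hy1
            exact (Sum.inl.inj heq) ▸ hs
          exact hRns S hST hRS
      · -- single spare is a deleted edge with `aVert R` not in its tail cluster
        obtain ⟨hεE, hDu₀, hnaR⟩ : ε ∈ E' ∧ DD R (tigV U (insert R T)) A' ε.1 ∧
            aVert R ∉ Cluster (tigV U (insert R T)) A' ε.1 := by
          have := Finset.mem_filter.mp hε
          exact ⟨this.1, this.2.1, this.2.2⟩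
        have hSpA0 : ∀ z : TigVertex α, (z, bVert R) ∉ A' := by
          intro z hz
          have hone : (z, bVert R) ∈ SpA := Finset.mem_filter.mpr ⟨hz, rfl⟩
          have h1 := Finset.card_pos.mpr ⟨ε, hε⟩
          have h2 := Finset.card_pos.mpr ⟨_, hone⟩
          omega
        have hSpEuniq : ∀ e ∈ SpE, e = ε := by
          intro e he
          by_contra hne
          have := Finset.one_lt_card.mpr ⟨e, he, ε, hε, hne⟩
          omega
        have hbRu₀ : bVert R ∈ Cluster (tigV U (insert R T)) A' ε.1 := by
          have hu₀V : ε.1 ∈ V' := (Finset.mem_product.mp (hc.edges_subset hεE)).1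
          obtain ⟨y, hy⟩ := cluster_nonempty hc ε.1 hu₀V
          rcases hDu₀ hy with h | h
          · exact absurd (h ▸ hy) hnaR
          · exact h ▸ hy
        have hfunnel : ∀ e ∈ E', bVert R ∈ Cluster (tigV U (insert R T)) A' e.1 → e = ε := by
          intro e he hbRe
          by_cases hDe : DD R (tigV U (insert R T)) A' e.1
          · by_cases haRe : aVert R ∈ Cluster (tigV U (insert R T)) A' e.1
            · exact absurd ⟨e, he, hDe, haRe, hbRe⟩ hPab
            · exact hSpEuniq e (Finset.mem_filter.mpr ⟨he, hDe, haRe⟩)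
          · exfalso
            have hne : e.1 ≠ bVert R := fun h => hDe (h ▸ D_bR hc)
            obtain ⟨z, hz1, hz2⟩ := last_arc hbRe.2 hne
            exact hSpA0 z hz2
        have hRin : ∀ r ∈ R, Sum.inl r ∈ Cluster (tigV U (insert R T)) A' ε.2 := by
          intro r hr
          obtain ⟨e, he, hx1, hy1⟩ := bRrow r hr
          have heq := hfunnel e he hx1
          exact heq ▸ hy1
        have hshapeR : ∀ y ∈ Cluster (tigV U (insert R T)) A' ε.2, ∃ s ∈ R, y = Sum.inl s :=
          fun y hy => tigE_row_b (edge_pair hc hεE hbRu₀ hy)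
        by_cases hgv : Good T (tigV U (insert R T)) A' ε.2
        · exfalso
          obtain ⟨S, hS, hSsh⟩ := hgv
          have hRS : R ⊆ S := by
            intro r hr
            obtain ⟨s, hs, heq⟩ := hSsh _ (hRin r hr)
            exact (Sum.inl.inj heq) ▸ hs
          exact hRns S hS hRS
        · have hnRch : ¬ Rch R (tigV U (insert R T)) A' E' ε.2 := by
            intro hR
            refine hgv (lemA hc hR ?_)
            intro y hy
            obtain ⟨s, -, hs⟩ := hshapeR y hy
            exact ⟨s, hs⟩
          have hv₀V : ε.2 ∈ V' := (Finset.mem_product.mp (hc.edges_subset hεE)).2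
          have hv₀nVb : ε.2 ∉ tigV U (insert R T) := by
            intro hmem
            have hcl := cluster_of_sink hc hv₀V hmem
            have h1 := hRin r₀ hr₀
            rw [hcl] at h1
            have hveq : ε.2 = Sum.inl r₀ := (Set.mem_singleton_iff.mp h1).symm
            apply hgv
            obtain ⟨S₀, hS₀, hrS₀⟩ := Finset.mem_sup.mp (hX₀cov hr₀)
            refine ⟨S₀, hX₀T hS₀, ?_⟩
            rw [hcl, hveq]
            rintro y rfl
            exact ⟨r₀, hrS₀, rfl⟩
          by_cases hbad : ∃ y, (ε.2, y) ∈ A' ∧ ¬ Good T (tigV U (insert R T)) A' y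
          · obtain ⟨y, hyA, hgy⟩ := hbad
            have hm2 : Sum.inl (ε.2, y) ∈ Del :=
              Finset.inl_mem_disjSum.mpr (mem_DelA.mpr ⟨hyA, fun hcon => hnRch hcon.1⟩)
            have hn2 : ¬ TokProp U T R A' (Sum.inl (ε.2, y)) := by
              simp only [TokProp]
              rintro (⟨-, hDy, -⟩ | ⟨-, hgy'⟩)
              · have hyV : y ∈ V' := (Finset.mem_product.mp (hc.arcs_subset hyA)).2
                obtain ⟨w, hw⟩ := cluster_nonempty hc y hyV
                have hw2 : w ∈ Cluster (tigV U (insert R T)) A' ε.2 :=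
                  cluster_subset_of_rtg (Relation.ReflTransGen.single hyA) hw
                obtain ⟨s, -, rfl⟩ := hshapeR w hw2
                rcases hDy hw with h | h <;> simp [aVert, bVert] at h
              · exact hgy hgy'
            obtain ⟨hm1, hn1⟩ := spareEdge ε hεE hDu₀ hnaR
            exact hfin _ _ hm1 hm2 hn1 hn2 (by simp)
          · push_neg at hbad
            set W₂ := Del.filter
              (fun t => Sum.elim (fun a => a.1 = ε.2) (fun _ => False) t) with hW₂Def
            have hcov₂ : ∀ r ∈ R, ∃ t ∈ W₂,
                fTok T (tigV U (insert R T)) A' t ∈ T ∧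
                r ∈ fTok T (tigV U (insert R T)) A' t := by
              intro r hr
              have h1 := hRin r hr
              have hne : ε.2 ≠ Sum.inl r := by
                intro h
                exact hv₀nVb (h ▸ (mem_cluster_vb h1))
              obtain ⟨y, hy1, hy2⟩ := first_arc h1.2 hne
              have hgy : Good T (tigV U (insert R T)) A' y := hbad y hy1
              refine ⟨Sum.inl (ε.2, y), Finset.mem_filter.mpr
                ⟨Finset.inl_mem_disjSum.mpr (mem_DelA.mpr ⟨hy1, fun hcon => hnRch hcon.1⟩),
                  rfl⟩, (fTok_good_head (a := (ε.2, y)) hgy).1, ?_⟩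
              obtain ⟨s, hs, heq⟩ := (fTok_good_head (a := (ε.2, y)) hgy).2 (Sum.inl r)
                ⟨mem_cluster_vb h1, hy2⟩
              exact (Sum.inl.inj heq) ▸ hs
            have hσ₁ : Sum.inr ε ∈ Del :=
              Finset.inr_mem_disjSum.mpr (mem_DelE.mpr ⟨hεE, hDu₀⟩)
            have hσ₁n : Sum.inr ε ∉ W₂ := fun h => (Finset.mem_filter.mp h).2
            obtain ⟨e, he, hx, hy⟩ := edge_cover hc
              (mem_tigE_iff.mpr ⟨R, Finset.mem_insert_self R T, Or.inl rfl, r₀, hr₀, rfl⟩)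
            by_cases hDe : DD R (tigV U (insert R T)) A' e.1
            · have hσ₂ : Sum.inr e ∈ Del :=
                Finset.inr_mem_disjSum.mpr (mem_DelE.mpr ⟨he, hDe⟩)
              have hσ₂n : Sum.inr e ∉ W₂ := fun h => (Finset.mem_filter.mp h).2
              have hne : (Sum.inr ε : (TigVertex α × TigVertex α) ⊕ _) ≠ Sum.inr e := by
                intro h
                exact ((Sum.inr.inj h) ▸ hnaR) hx
              obtain ⟨X, hX1, hX2, hX3⟩ :=
                assemble (Finset.filter_subset _ _) hσ₁ hσ₂ hσ₁n hσ₂n hne hcov₂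
              exact ⟨X, hX1, hX2, by rw [hDelcard] at hX3; exact hX3⟩
            · have hnea : e.1 ≠ aVert R := fun h => hDe (h ▸ D_aR hc)
              obtain ⟨z, hz1, hz2⟩ := last_arc hx.2 hnea
              have hσ₂ : Sum.inl (z, aVert R) ∈ Del :=
                Finset.inl_mem_disjSum.mpr
                  (mem_DelA.mpr ⟨hz2, fun hcon => hcon.2.2 (D_aR hc)⟩)
              have hσ₂n : Sum.inl (z, aVert R) ∉ W₂ := by
                intro h
                have hzeq : z = ε.2 := (Finset.mem_filter.mp h).2
                have h0 : aVert R ∈ Cluster (tigV U (insert R T)) A' z :=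
                  ⟨aR_mem_Vb, Relation.ReflTransGen.single hz2⟩
                rw [hzeq] at h0
                obtain ⟨s, -, hs⟩ := hshapeR _ h0
                simp [aVert] at hs
              have hne : (Sum.inr ε : (TigVertex α × TigVertex α) ⊕ _) ≠
                  Sum.inl (z, aVert R) := by simp
              obtain ⟨X, hX1, hX2, hX3⟩ :=
                assemble (Finset.filter_subset _ _) hσ₁ hσ₂ hσ₁n hσ₂n hne hcov₂
              exact ⟨X, hX1, hX2, by rw [hDelcard] at hX3; exact hX3⟩

end TwinnedAux
namespace TwinnedAux
set_option linter.unusedSectionVars false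

open Finset Relation

variable {α : Type*} [DecidableEq α]

lemma rtg_empty {β : Type*} [DecidableEq β] {x y : β}
    (h : Relation.ReflTransGen (ArcRel (∅ : Finset (β × β))) x y) : x = y := by
  induction h with
  | refl => rfl
  | tail _ h2 _ => exact absurd h2 (Finset.notMem_empty _)

lemma cluster_empty {β : Type*} [DecidableEq β] {Vb : Finset β} {v : β} (hv : v ∈ Vb) :
    Cluster Vb (∅ : Finset (β × β)) v = {v} := by
  ext y
  constructor
  · rintro ⟨hyb, hr⟩
    exact (rtg_empty hr).symm
  · rintro rfl
    exact ⟨hv, Relation.ReflTransGen.refl⟩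

lemma inl_mem_tigV {U : Finset α} {T : Finset (Finset α)} {u : α} (hu : u ∈ U) :
    Sum.inl u ∈ tigV U T := by
  simp only [tigV, Finset.mem_union, Finset.mem_image]
  exact Or.inl (Or.inl ⟨u, hu, rfl⟩)

lemma trivial_comp {U : Finset α} {T' : Finset (Finset α)} (hT' : ∀ S ∈ T', S ⊆ U) :
    IsDagCompression (tigV U T') (tigE T') (tigV U T') ∅ (tigE T') := by
  have hsub : tigE T' ⊆ (tigV U T') ×ˢ (tigV U T') := by
    intro e he
    obtain ⟨x, y⟩ := e
    obtain ⟨S, hS, hx, s, hs, rfl⟩ := mem_tigE_iff.mp he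
    refine Finset.mem_product.mpr ⟨?_, inl_mem_tigV (hT' S hS hs)⟩
    rcases hx with rfl | rfl
    · exact aVert_mem_tigV hS
    · exact bVert_mem_tigV hS
  constructor
  · exact Finset.Subset.rfl
  · exact Finset.empty_subset _
  · intro v h
    cases h with
    | single h => exact absurd h (Finset.notMem_empty _)
    | tail _ h => exact absurd h (Finset.notMem_empty _)
  · intro v hv
    exact ⟨fun _ => hv, fun _ u h => absurd h (Finset.notMem_empty _)⟩
  · exact hsub
  · ext p
    obtain ⟨x, y⟩ := p
    simp only [Finset.mem_coe, Set.mem_iUnion, Set.mem_prod]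
    constructor
    · intro h
      have hmem := Finset.mem_product.mp (hsub h)
      refine ⟨(x, y), h, ?_, ?_⟩
      · rw [cluster_empty hmem.1]
        rfl
      · rw [cluster_empty hmem.2]
        rfl
    · rintro ⟨e, he, hx, hy⟩
      obtain ⟨hx1, hx2⟩ := hx
      obtain ⟨hy1, hy2⟩ := hy
      have h1 : e.1 = x := rtg_empty hx2
      have h2 : e.2 = y := rtg_empty hy2
      rw [← h1, ← h2]
      exact he

end TwinnedAux

open TwinnedAux

/-- if `R ⊆ U` is nonempty, not a subset of any member of `T`, but covered
by some subcollection of `T`, and `k` is the minimum cardinality of a subcollection of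
`T` covering `R`, then `s' ≥ s + k + 2` for the minimum compression sizes `s`, `s'` of
the twinned incidence graphs of `T` and `T ∪ {R}`. -/
theorem twinned_size_lower_bound {α : Type*} [DecidableEq α] [Infinite α]
    (U : Finset α) (T : Finset (Finset α)) (hT : ∀ S ∈ T, S ⊆ U)
    (R : Finset α) (hRU : R ⊆ U) (hRne : R.Nonempty)
    (hRns : ∀ S ∈ T, ¬ R ⊆ S)
    (X₀ : Finset (Finset α)) (hX₀T : X₀ ⊆ T) (hX₀cov : R ⊆ X₀.sup id)
    (k : ℕ)
    (hk : k = sInf {m | ∃ X : Finset (Finset α), X ⊆ T ∧ R ⊆ X.sup id ∧ X.card = m}) :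
    minCompSize (tigV U T) (tigE T) + k + 2 ≤
      minCompSize (tigV U (insert R T)) (tigE (insert R T)) := by
  classical
  have hRT : R ∉ T := fun h => hRns R h Finset.Subset.rfl
  have hT' : ∀ S ∈ insert R T, S ⊆ U := by
    intro S hS
    rcases Finset.mem_insert.mp hS with rfl | h
    · exact hRU
    · exact hT S h
  have hne_set : {n | ∃ (V : Finset (TigVertex α)) (A E : Finset (TigVertex α × TigVertex α)),
      IsDagCompression (tigV U (insert R T)) (tigE (insert R T)) V A E ∧
        A.card + E.card = n}.Nonempty :=
    ⟨_, _, _, _, trivial_comp hT', rfl⟩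
  have hmem : minCompSize (tigV U (insert R T)) (tigE (insert R T)) ∈
      {n | ∃ (V : Finset (TigVertex α)) (A E : Finset (TigVertex α × TigVertex α)),
        IsDagCompression (tigV U (insert R T)) (tigE (insert R T)) V A E ∧
          A.card + E.card = n} := by
    rw [minCompSize]
    exact Nat.sInf_mem hne_set
  obtain ⟨V', A', E', hc, hsize⟩ := hmem
  have hcomp := constr hc hRT
  have hs1 : minCompSize (tigV U T) (tigE T) ≤
      (KeepA U T R A' E').card + (KeepE U T R A' E').card := by
    rw [minCompSize]
    exact Nat.sInf_le ⟨_, _, _, hcomp, rfl⟩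
  obtain ⟨X, hXT, hXcov, hXcard⟩ := count hc hRT hRne hRns hX₀T hX₀cov
  have hkle : k ≤ X.card := by
    rw [hk]
    exact Nat.sInf_le ⟨X, hXT, hXcov, rfl⟩
  have hA := card_KeepA_DelA (U := U) (T := T) (R := R) (A := A') (E := E')
  have hE := card_KeepE_DelE (U := U) (T := T) (R := R) (A := A') (E := E')
  rw [← hsize]
  omega
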